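/- Let A be a commutative ring and r_1, r_2 ∈ A such that (r_1 − r_2)^ℓ = 0 for some ℓ ≥ 1. Then in A[[Y]]: (1 − r_1 Y)^{-1}(1 − r_2 Y)^{-1} = Σ_{j=0}^{ℓ−1} (r_1 − r_2)^j Y^j (1 − r_2 Y)^{-(j+2)}. -/

import Mathlib

lemma ring_inverse_eq_of_mul_eq_one {M₀ : Type*} [CommMonoidWithZero M₀] {a b : M₀}
    (hab : a * b = 1) : Ring.inverse a = b := by
  have hu : IsUnit a := IsUnit.of_mul_eq_one b hab
  calc Ring.inverse a = Ring.inverse a * (a * b) := by rw [hab, mul_one]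
    _ = (Ring.inverse a * a) * b := by rw [mul_assoc]
    _ = b := by rw [Ring.inverse_mul_cancel a hu, one_mul]

open PowerSeries in
theorem stmt_4 (A : Type*) [CommRing A] (r₁ r₂ : A) (ℓ : ℕ) (hℓ : 1 ≤ ℓ)
    (h : (r₁ - r₂) ^ ℓ = 0) :
    Ring.inverse (1 - PowerSeries.C r₁ * PowerSeries.X) *
      Ring.inverse (1 - PowerSeries.C r₂ * PowerSeries.X) =
    ∑ j ∈ Finset.range ℓ,
      PowerSeries.C ((r₁ - r₂) ^ j) * PowerSeries.X ^ j *
        Ring.inverse ((1 - PowerSeries.C r₂ * PowerSeries.X) ^ (j + 2)) := by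
  set u : A⟦X⟧ := 1 - C r₂ * X with hu_def
  set d : A⟦X⟧ := C (r₁ - r₂) * X with hd_def
  have hu : IsUnit u := by
    rw [PowerSeries.isUnit_iff_constantCoeff]
    simp [hu_def]
  have hd : d ^ ℓ = 0 := by
    rw [hd_def, mul_pow, ← map_pow, h, map_zero, zero_mul]
  set v : A⟦X⟧ := Ring.inverse u with hv_def
  have huv : u * v = 1 := Ring.mul_inverse_cancel u hu
  -- inverse of powers of u
  have hpow : ∀ n : ℕ, Ring.inverse (u ^ n) = v ^ n := by
    intro n
    apply ring_inverse_eq_of_mul_eq_one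
    rw [← mul_pow, huv, one_pow]
  -- geometric sum inverse
  have hgeom : (1 - d * v) * ∑ j ∈ Finset.range ℓ, (d * v) ^ j = 1 := by
    rw [mul_neg_geom_sum, mul_pow, hd, zero_mul, sub_zero]
  have hinv_geom : Ring.inverse (1 - d * v) = ∑ j ∈ Finset.range ℓ, (d * v) ^ j :=
    ring_inverse_eq_of_mul_eq_one hgeom
  -- factorization
  have hfac : 1 - C r₁ * X = u * (1 - d * v) := by
    have : u * (1 - d * v) = u - d * (u * v) := by ring
    rw [this, huv, mul_one, hu_def, hd_def, map_sub]
    ring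
  have hinv1 : Ring.inverse (1 - C r₁ * X) = v * ∑ j ∈ Finset.range ℓ, (d * v) ^ j := by
    apply ring_inverse_eq_of_mul_eq_one
    rw [hfac]
    calc u * (1 - d * v) * (v * ∑ j ∈ Finset.range ℓ, (d * v) ^ j)
        = (u * v) * ((1 - d * v) * ∑ j ∈ Finset.range ℓ, (d * v) ^ j) := by ring
      _ = 1 := by rw [huv, hgeom, mul_one]
  rw [hinv1, Finset.mul_sum, Finset.sum_mul]
  refine Finset.sum_congr rfl fun j _ => ?_
  simp only [hpow (j + 2), hd_def, mul_pow, map_pow]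
  ring
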